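/- Let σ be a nonincreasing nonnegative sequence and let (M(α,β))_{α≥1, 1≤β≤r} be a matrix with ∑_β M(α,β)² ≤ 1 for each α and ∑_α M(α,β)² ≤ 1 for each β. Then ∑_{α,β} σ(α) M(α,β)² ≤ ∑_{α=1}^{r} σ(α). -/

import Mathlib

open Finset

lemma key_finite (σ : ℕ → ℝ) (hn : ∀ α, 0 ≤ σ α) (hm : Antitone σ) (r N : ℕ)
    (w : ℕ → ℝ) (hw0 : ∀ α, 0 ≤ w α) (hw1 : ∀ α, w α ≤ 1)
    (hws : ∑ α ∈ Finset.range N, w α ≤ (r : ℝ)) :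
    ∑ α ∈ Finset.range N, σ α * w α ≤ ∑ α ∈ Finset.range r, σ α := by
  rcases le_or_gt N r with h | h
  · calc ∑ α ∈ range N, σ α * w α
        ≤ ∑ α ∈ range N, σ α :=
          Finset.sum_le_sum fun i _ => mul_le_of_le_one_right (hn i) (hw1 i)
      _ ≤ ∑ α ∈ range r, σ α :=
          Finset.sum_le_sum_of_subset_of_nonneg (Finset.range_subset_range.mpr h)
            (fun i _ _ => hn i)
  · have hsplit : ∑ α ∈ range N, σ α * w α
        = ∑ α ∈ range r, σ α * w α + ∑ α ∈ Finset.Ico r N, σ α * w α := by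
      exact (Finset.sum_range_add_sum_Ico _ h.le).symm
    have h1 : ∑ α ∈ range r, σ α * w α
        ≤ ∑ α ∈ range r, (σ α + σ r * (w α - 1)) := by
      apply Finset.sum_le_sum
      intro i hi
      have hir : σ r ≤ σ i := hm (Finset.mem_range.mp hi).le
      nlinarith [hw1 i, hn i]
    have h2 : ∑ α ∈ Finset.Ico r N, σ α * w α
        ≤ ∑ α ∈ Finset.Ico r N, σ r * w α := by
      apply Finset.sum_le_sum
      intro i hi
      exact mul_le_mul_of_nonneg_right (hm (Finset.mem_Ico.mp hi).1) (hw0 i)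
    have hsum2 : ∑ α ∈ range r, (σ α + σ r * (w α - 1))
        + ∑ α ∈ Finset.Ico r N, σ r * w α
        = ∑ α ∈ range r, σ α + σ r * (∑ α ∈ range N, w α - r) := by
      rw [Finset.sum_add_distrib, ← Finset.mul_sum, ← Finset.mul_sum]
      have : ∑ α ∈ range r, (w α - 1) + ∑ α ∈ Finset.Ico r N, w α
          = ∑ α ∈ range N, w α - r := by
        rw [Finset.sum_sub_distrib, Finset.sum_const, Finset.card_range,
          nsmul_eq_mul, mul_one]
        have := Finset.sum_range_add_sum_Ico w h.le
        linarith
      rw [← this]; ring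
    have hlast : σ r * (∑ α ∈ range N, w α - r) ≤ 0 :=
      mul_nonpos_of_nonneg_of_nonpos (hn r) (by linarith)
    linarith
theorem stmt_2 (σ : ℕ → ℝ) (hσ_nonneg : ∀ α, 0 ≤ σ α) (hσ_mono : Antitone σ)
    (hσ_summable : Summable σ)
    (r : ℕ) (M : ℕ → Fin r → ℝ)
    (hrow : ∀ α, ∑ β, (M α β) ^ 2 ≤ 1)
    (hcol_summable : ∀ β, Summable (fun α => (M α β) ^ 2))
    (hcol : ∀ β, ∑' α, (M α β) ^ 2 ≤ 1)
    (hlhs_summable : Summable (fun α => σ α * ∑ β, (M α β) ^ 2)) :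
    ∑' α, σ α * ∑ β, (M α β) ^ 2 ≤ ∑ α ∈ Finset.range r, σ α := by
  set w : ℕ → ℝ := fun α => ∑ β, (M α β) ^ 2 with hw
  have hw0 : ∀ α, 0 ≤ w α := fun α => Finset.sum_nonneg fun β _ => sq_nonneg _
  have hterm0 : ∀ α, 0 ≤ σ α * w α := fun α => mul_nonneg (hσ_nonneg α) (hw0 α)
  apply Summable.tsum_le_of_sum_le hlhs_summable
  intro s
  obtain ⟨N, hN⟩ := s.exists_nat_subset_range
  have h1 : ∑ α ∈ s, σ α * w α ≤ ∑ α ∈ range N, σ α * w α :=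
    Finset.sum_le_sum_of_subset_of_nonneg hN (fun i _ _ => hterm0 i)
  refine h1.trans (key_finite σ hσ_nonneg hσ_mono r N w hw0 hrow ?_)
  calc ∑ α ∈ range N, w α = ∑ β, ∑ α ∈ range N, (M α β) ^ 2 := Finset.sum_comm
    _ ≤ ∑ β : Fin r, (1 : ℝ) := Finset.sum_le_sum fun β _ =>
        le_trans (Summable.sum_le_tsum _ (fun i _ => sq_nonneg _) (hcol_summable β)) (hcol β)
    _ = (r : ℝ) := by simp
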